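/- Let φ : ℝ^n → ℝ ∪ {+∞} be proper, lower semicontinuous, asymptotically level stable and bounded below, B ∈ ℝ^{m×n}, λ > 0. Then Φ(x) = φ(x) + λ‖Bx‖₀ attains its infimum on ℝ^n. -/

import Mathlib

open Filter Topology

noncomputable def l2 {n : ℕ} (x : Fin n → ℝ) : ℝ := Real.sqrt (∑ i, (x i)^2)

noncomputable def l0 {m : ℕ} (y : Fin m → ℝ) : ℕ :=
  (Finset.univ.filter fun i => y i ≠ 0).card

/-- Asymptotic function `f_∞(x) = liminf_{x'→x, t→+∞} f(t x')/t`. -/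
noncomputable def asympFn {n : ℕ} (f : (Fin n → ℝ) → EReal) (x : Fin n → ℝ) : EReal :=
  Filter.liminf (fun p : (Fin n → ℝ) × ℝ => f (p.2 • p.1) / (p.2 : EReal)) ((𝓝 x) ×ˢ atTop)

/-- Asymptotically level stable function. -/
def ALS {n : ℕ} (f : (Fin n → ℝ) → EReal) : Prop :=
  ∀ ρ : ℝ, 0 < ρ → ∀ t : ℕ → ℝ, (∃ M : ℝ, ∀ k, |t k| ≤ M) →
  ∀ (x : ℕ → Fin n → ℝ) (xb : Fin n → ℝ),
    (∀ k, f (x k) ≤ (t k : EReal)) →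
    Tendsto (fun k => l2 (x k)) atTop atTop →
    Tendsto (fun k => (l2 (x k))⁻¹ • x k) atTop (𝓝 xb) →
    asympFn f xb = 0 →
    ∃ k0 : ℕ, ∀ k ≥ k0, f (x k - ρ • xb) ≤ (t k : EReal)

section AuxLemmas

variable {n m : ℕ}

lemma l2_nonneg (x : Fin n → ℝ) : 0 ≤ l2 x := Real.sqrt_nonneg _

lemma l2_sq (x : Fin n → ℝ) : l2 x ^ 2 = ∑ i, (x i) ^ 2 :=
  Real.sq_sqrt (Finset.sum_nonneg fun i _ => sq_nonneg _)

lemma abs_le_l2 (x : Fin n → ℝ) (i : Fin n) : |x i| ≤ l2 x := by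
  rw [l2, ← Real.sqrt_sq_eq_abs]
  exact Real.sqrt_le_sqrt
    (Finset.single_le_sum (fun j _ => sq_nonneg (x j)) (Finset.mem_univ i))

lemma l2_continuous : Continuous (l2 (n := n)) :=
  Real.continuous_sqrt.comp (continuous_finset_sum _ fun i _ => (continuous_apply i).pow 2)

lemma l2_smul (c : ℝ) (x : Fin n → ℝ) : l2 (c • x) = |c| * l2 x := by
  have : ∑ i, (c * x i) ^ 2 = c ^ 2 * ∑ i, (x i) ^ 2 := by
    rw [Finset.mul_sum]; congr 1; ext i; ring
  simp only [l2, Pi.smul_apply, smul_eq_mul, this]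
  rw [Real.sqrt_mul (sq_nonneg c), Real.sqrt_sq_eq_abs]

lemma l2_eq_zero {x : Fin n → ℝ} (h : l2 x = 0) : x = 0 := by
  have hs : ∑ i, (x i) ^ 2 = 0 := by
    have h2 : ∑ i, (x i) ^ 2 ≤ 0 := Real.sqrt_eq_zero'.mp h
    exact le_antisymm h2 (Finset.sum_nonneg fun i _ => sq_nonneg _)
  funext i
  have := (Finset.sum_eq_zero_iff_of_nonneg (fun j _ => sq_nonneg (x j))).1 hs i
    (Finset.mem_univ i)
  exact pow_eq_zero_iff (n := 2) (by norm_num) |>.1 this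

lemma norm_le_l2 (x : Fin n → ℝ) : ‖x‖ ≤ l2 x := by
  refine (pi_norm_le_iff_of_nonneg (l2_nonneg x)).2 fun i => ?_
  rw [Real.norm_eq_abs]; exact abs_le_l2 x i

/-- Existence of a minimal-`l2`-norm element of a nonempty closed set. -/
lemma exists_min_l2 {s : Set (Fin n → ℝ)} (hcl : IsClosed s) (hne : s.Nonempty) :
    ∃ x ∈ s, ∀ y ∈ s, l2 x ≤ l2 y := by
  obtain ⟨x0, hx0⟩ := hne
  set K : Set (Fin n → ℝ) := s ∩ {y | l2 y ≤ l2 x0} with hK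
  have hKc : IsClosed K := hcl.inter (isClosed_le l2_continuous continuous_const)
  have hKb : Bornology.IsBounded K := by
    refine (Metric.isBounded_closedBall (x := (0 : Fin n → ℝ)) (r := l2 x0)).subset ?_
    intro y hy
    rw [Metric.mem_closedBall, dist_zero_right]
    exact (norm_le_l2 y).trans hy.2
  have hKcomp : IsCompact K := Metric.isCompact_of_isClosed_isBounded hKc hKb
  obtain ⟨x, hxK, hmin⟩ :=
    hKcomp.exists_isMinOn ⟨x0, hx0, le_refl (l2 x0)⟩ l2_continuous.continuousOn
  refine ⟨x, hxK.1, fun y hy => ?_⟩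
  by_cases h : l2 y ≤ l2 x0
  · exact hmin ⟨hy, h⟩
  · exact le_trans (hmin ⟨hx0, le_refl (l2 x0)⟩) (le_of_not_ge h)

end AuxLemmas

lemma mulVec_coord_continuous {n m : ℕ} (B : Matrix (Fin m) (Fin n) ℝ) (i : Fin m) :
    Continuous fun v : Fin n → ℝ => B.mulVec v i := by
  simp only [Matrix.mulVec, dotProduct]
  exact continuous_finset_sum _ fun j _ => continuous_const.mul (continuous_apply j)

lemma eventually_l0_le {n m : ℕ} (B : Matrix (Fin m) (Fin n) ℝ) (x : Fin n → ℝ) :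
    ∀ᶠ x' in 𝓝 x, l0 (B.mulVec x) ≤ l0 (B.mulVec x') := by
  have h : ∀ᶠ x' in 𝓝 x, ∀ i ∈ (Finset.univ.filter fun i => B.mulVec x i ≠ 0),
      B.mulVec x' i ≠ 0 := by
    rw [Filter.eventually_all_finset]
    intro i hi
    exact ((mulVec_coord_continuous B i).continuousAt (x := x)).eventually_ne
      (Finset.mem_filter.1 hi).2
  filter_upwards [h] with x' hx'
  apply Finset.card_le_card
  intro i hi
  exact Finset.mem_filter.2 ⟨Finset.mem_univ i, hx' i hi⟩

lemma Phi_lsc {n m : ℕ} {φ : (Fin n → ℝ) → EReal} (hlsc : LowerSemicontinuous φ)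
    (B : Matrix (Fin m) (Fin n) ℝ) {lam : ℝ} (hlam : 0 ≤ lam) :
    LowerSemicontinuous fun x => φ x + ((lam * (l0 (B.mulVec x) : ℝ) : ℝ) : EReal) := by
  intro x y hy
  set r : ℝ := lam * (l0 (B.mulVec x) : ℝ) with hr
  have h2 : y - (r : EReal) < φ x :=
    (EReal.sub_lt_iff (Or.inl (EReal.coe_ne_bot r)) (Or.inl (EReal.coe_ne_top r))).2 hy
  filter_upwards [hlsc x _ h2, eventually_l0_le B x] with x' h1 h3
  have hrr : (r : EReal) ≤ ((lam * (l0 (B.mulVec x') : ℝ) : ℝ) : EReal) := by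
    exact_mod_cast mul_le_mul_of_nonneg_left (Nat.cast_le.2 h3) hlam
  calc y < φ x' + (r : EReal) :=
        (EReal.sub_lt_iff (Or.inl (EReal.coe_ne_bot r)) (Or.inl (EReal.coe_ne_top r))).1 h1
    _ ≤ _ := add_le_add le_rfl hrr



set_option maxHeartbeats 2000000

/-- If `φ` is proper, lsc, asymptotically level stable and bounded below, then
`Φ(x) = φ(x) + λ‖Bx‖₀` attains its infimum on ℝ^n. -/
theorem Phi_attains_min (n m : ℕ) (φ : (Fin n → ℝ) → EReal)
    (hproper : ∃ x, φ x ≠ ⊤) (hnb : ∀ x, φ x ≠ ⊥)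
    (hlsc : LowerSemicontinuous φ) (hals : ALS φ)
    (hbdd : ∃ c : ℝ, ∀ x, (c : EReal) ≤ φ x)
    (B : Matrix (Fin m) (Fin n) ℝ) (lam : ℝ) (hlam : 0 < lam) :
    ∃ xs : Fin n → ℝ, ∀ x : Fin n → ℝ,
      φ xs + ((lam * (l0 (B.mulVec xs) : ℝ) : ℝ) : EReal)
        ≤ φ x + ((lam * (l0 (B.mulVec x) : ℝ) : ℝ) : EReal) := by
  classical
  obtain ⟨c, hc⟩ := hbdd
  obtain ⟨x0, hx0⟩ := hproper
  set Φ : (Fin n → ℝ) → EReal :=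
    fun x => φ x + ((lam * (l0 (B.mulVec x) : ℝ) : ℝ) : EReal) with hΦdef
  have hΦlsc : LowerSemicontinuous Φ := Phi_lsc hlsc B hlam.le
  have hΦlb : ∀ x, (c : EReal) ≤ Φ x := by
    intro x
    refine (hc x).trans (le_add_of_nonneg_right ?_)
    exact_mod_cast mul_nonneg hlam.le (Nat.cast_nonneg _)
  set α : EReal := ⨅ x, Φ x with hαdef
  have hαlb : (c : EReal) ≤ α := le_iInf hΦlb
  have hαub : α ≤ Φ x0 := iInf_le _ _
  have hΦx0top : Φ x0 ≠ ⊤ := (EReal.add_lt_top hx0 (EReal.coe_ne_top _)).ne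
  have hat : α ≠ ⊤ := (hαub.trans_lt (lt_top_iff_ne_top.2 hΦx0top)).ne
  have hab : α ≠ ⊥ := fun h => by simp [h] at hαlb
  set a : ℝ := α.toReal with hadef
  have haeq : (a : EReal) = α := EReal.coe_toReal hat hab
  set L : ℕ → Set (Fin n → ℝ) :=
    fun k => {x | Φ x ≤ ((a + 1/((k : ℝ)+1) : ℝ) : EReal)} with hLdef
  have hLcl : ∀ k, IsClosed (L k) := fun k => hΦlsc.isClosed_preimage _
  have hLne : ∀ k, (L k).Nonempty := by
    intro k
    have h1 : α < ((a + 1/((k : ℝ)+1) : ℝ) : EReal) := by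
      rw [← haeq]
      exact_mod_cast (lt_add_iff_pos_right a).2 (by positivity)
    rw [hαdef, iInf_lt_iff] at h1
    obtain ⟨x, hx⟩ := h1
    exact ⟨x, hx.le⟩
  choose xmin hxmem hxmin using fun k => exists_min_l2 (hLcl k) (hLne k)
  by_cases hbc : ∃ M : ℝ, ∀ k, l2 (xmin k) ≤ M
  · -- bounded case
    obtain ⟨M, hM⟩ := hbc
    have hball : ∀ k, xmin k ∈ Metric.closedBall (0 : Fin n → ℝ) M := fun k => by
      rw [Metric.mem_closedBall, dist_zero_right]
      exact (norm_le_l2 _).trans (hM k)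
    obtain ⟨xb, -, σ, hσ, hconv⟩ :=
      (isCompact_closedBall (0 : Fin n → ℝ) M).tendsto_subseq hball
    have key : ∀ t : ℝ, a < t → Φ xb ≤ (t : EReal) := by
      intro t ht
      obtain ⟨N, hN⟩ := exists_nat_one_div_lt (by linarith : (0:ℝ) < t - a)
      have hmem : ∀ᶠ j in atTop, xmin (σ j) ∈ {x | Φ x ≤ (t : EReal)} := by
        filter_upwards [eventually_ge_atTop N] with j hj
        have h1 : Φ (xmin (σ j)) ≤ ((a + 1/((σ j : ℝ)+1) : ℝ) : EReal) := hxmem (σ j)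
        refine le_trans h1 (EReal.coe_le_coe_iff.2 ?_)
        have h2 : (N : ℝ) ≤ (σ j : ℝ) := by exact_mod_cast hj.trans hσ.le_apply
        have h3 : 1/((σ j : ℝ)+1) ≤ 1/((N : ℝ)+1) := by
          apply one_div_le_one_div_of_le
          · positivity
          · linarith
        linarith
      have hcl : IsClosed {x : Fin n → ℝ | Φ x ≤ (t : EReal)} := hΦlsc.isClosed_preimage _
      exact hcl.mem_of_tendsto hconv hmem
    have hΦxb : Φ xb ≤ α := by
      by_contra h
      push_neg at h
      obtain ⟨t, ht1, ht2⟩ := EReal.exists_between_coe_real h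
      have ha_t : a < t := by
        rw [← haeq] at ht1
        exact_mod_cast ht1
      exact absurd ((key t ha_t).trans_lt ht2) (lt_irrefl _)
    exact ⟨xb, fun x => hΦxb.trans (iInf_le _ x)⟩
  · -- unbounded case: contradiction
    exfalso
    push_neg at hbc
    have hfreq : ∀ N : ℕ, ∃ᶠ k in atTop, (N : ℝ) ≤ l2 (xmin k) := by
      intro N
      rw [frequently_atTop]
      intro a0
      obtain ⟨k, hk⟩ := hbc (max (N : ℝ) (∑ i ∈ Finset.range a0, l2 (xmin i)))
      refine ⟨k, ?_, (le_max_left _ _).trans hk.le⟩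
      by_contra h
      push_neg at h
      have h1 : l2 (xmin k) ≤ ∑ i ∈ Finset.range a0, l2 (xmin i) :=
        Finset.single_le_sum (fun i _ => l2_nonneg _) (Finset.mem_range.2 h)
      exact absurd (h1.trans (le_max_right _ _)) (not_le.2 hk)
    obtain ⟨σ1, hσ1, hσ1p⟩ := Filter.extraction_forall_of_frequently hfreq
    have htop : Tendsto (fun j => l2 (xmin (σ1 j))) atTop atTop :=
      tendsto_atTop_mono hσ1p tendsto_natCast_atTop_atTop
    set u : ℕ → Fin n → ℝ := fun j => (l2 (xmin (σ1 j)))⁻¹ • xmin (σ1 j) with hudef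
    have hunorm : ∀ j, u j ∈ Metric.closedBall (0 : Fin n → ℝ) 1 := by
      intro j
      rw [Metric.mem_closedBall, dist_zero_right]
      rcases eq_or_ne (l2 (xmin (σ1 j))) 0 with h | h
      · simp [hudef, h]
      · refine (norm_le_l2 _).trans ?_
        rw [hudef, l2_smul, abs_of_nonneg (inv_nonneg.2 (l2_nonneg _)),
          inv_mul_cancel₀ h]
    obtain ⟨xb, -, σ2, hσ2, hconv⟩ :=
      (isCompact_closedBall (0 : Fin n → ℝ) 1).tendsto_subseq hunorm
    have hxb1 : l2 xb = 1 := by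
      have h1 : Tendsto (fun j => l2 (u (σ2 j))) atTop (𝓝 (l2 xb)) :=
        (l2_continuous.tendsto xb).comp hconv
      have h2 : (fun j => l2 (u (σ2 j))) =ᶠ[atTop] fun _ => (1 : ℝ) := by
        filter_upwards [eventually_ge_atTop 1] with j hj
        have hj1 : (1 : ℝ) ≤ l2 (xmin (σ1 (σ2 j))) := by
          have hj2 : ((σ2 j : ℕ) : ℝ) ≤ l2 (xmin (σ1 (σ2 j))) := hσ1p (σ2 j)
          have hj3 : (1 : ℝ) ≤ ((σ2 j : ℕ) : ℝ) := by
            exact_mod_cast hj.trans hσ2.le_apply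
          linarith
        have hne : l2 (xmin (σ1 (σ2 j))) ≠ 0 := by intro h; rw [h] at hj1; linarith
        rw [hudef]
        rw [l2_smul, abs_of_nonneg (inv_nonneg.2 (l2_nonneg _)), inv_mul_cancel₀ hne]
      exact tendsto_nhds_unique h1 (Tendsto.congr' h2.symm tendsto_const_nhds)
    -- pigeonhole on supports
    have hTex : ∃ T : Finset (Fin m), ∃ᶠ j in atTop,
        (Finset.univ.filter fun i => B.mulVec (xmin (σ1 (σ2 j))) i ≠ 0) = T := by
      by_contra hcon
      push_neg at hcon
      have h1 : ∀ᶠ j in atTop, ∀ T : Finset (Fin m),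
          ¬ (Finset.univ.filter fun i => B.mulVec (xmin (σ1 (σ2 j))) i ≠ 0) = T :=
        Filter.eventually_all.2 fun T => (hcon T)
      obtain ⟨j, hj⟩ := h1.exists
      exact hj _ rfl
    obtain ⟨T, hTfreq⟩ := hTex
    obtain ⟨σ3, hσ3, hσ3p⟩ := Filter.extraction_of_frequently_atTop hTfreq
    set τ : ℕ → ℕ := fun j => σ1 (σ2 (σ3 j)) with hτdef
    set y : ℕ → Fin n → ℝ := fun j => xmin (τ j) with hydef
    set s : ℕ → ℝ := fun j => a + 1/((τ j : ℝ)+1) - lam * (T.card : ℝ) with hsdef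
    have hy_supp : ∀ j, (Finset.univ.filter fun i => B.mulVec (y j) i ≠ 0) = T :=
      fun j => hσ3p j
    have hy_l2_top : Tendsto (fun j => l2 (y j)) atTop atTop :=
      htop.comp ((hσ2.comp hσ3).tendsto_atTop)
    have hy_dir : Tendsto (fun j => (l2 (y j))⁻¹ • y j) atTop (𝓝 xb) :=
      hconv.comp hσ3.tendsto_atTop
    have hφy : ∀ j, φ (y j) ≤ ((s j : ℝ) : EReal) := by
      intro j
      have h1 : Φ (y j) ≤ ((a + 1/((τ j : ℝ)+1) : ℝ) : EReal) := hxmem (τ j)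
      have h2 : φ (y j) + ((lam * (T.card : ℝ) : ℝ) : EReal)
          ≤ ((a + 1/((τ j : ℝ)+1) : ℝ) : EReal) := by
        have h3 : l0 (B.mulVec (y j)) = T.card := by rw [l0, hy_supp j]
        rw [hΦdef] at h1
        simpa [h3] using h1
      have h4 : φ (y j) ≤ ((a + 1/((τ j : ℝ)+1) : ℝ) : EReal)
          - ((lam * (T.card : ℝ) : ℝ) : EReal) :=
        (EReal.le_sub_iff_add_le (Or.inl (EReal.coe_ne_bot _))
          (Or.inl (EReal.coe_ne_top _))).2 h2
      refine h4.trans (le_of_eq ?_)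
      rw [← EReal.coe_sub]
    have hsb : ∃ M : ℝ, ∀ j, |s j| ≤ M := by
      refine ⟨|a| + 1 + lam * (T.card : ℝ), fun j => ?_⟩
      have h1 : (0:ℝ) < (τ j : ℝ) + 1 := by positivity
      have h2 : 1/((τ j : ℝ)+1) ≤ 1 := by
        rw [div_le_one h1]
        have : (0:ℝ) ≤ (τ j : ℝ) := Nat.cast_nonneg _
        linarith
      have h3 : (0:ℝ) < 1/((τ j : ℝ)+1) := by positivity
      have h4 : (0:ℝ) ≤ lam * (T.card : ℝ) := by positivity
      have h5 : a ≤ |a| := le_abs_self a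
      have h6 : -a ≤ |a| := neg_le_abs a
      rw [abs_le, hsdef]
      constructor <;> simp only <;> nlinarith
    have hasymp : asympFn φ xb = 0 := by
      have hge : (0 : EReal) ≤ asympFn φ xb := by
        have h3 : Tendsto (fun p : (Fin n → ℝ) × ℝ => ((c / p.2 : ℝ) : EReal))
            ((𝓝 xb) ×ˢ atTop) (𝓝 (0 : EReal)) := by
          rw [show (0 : EReal) = ((0 : ℝ) : EReal) by simp]
          exact EReal.tendsto_coe.2 (tendsto_const_nhds.div_atTop tendsto_snd)
        have h2 : ∀ᶠ p : (Fin n → ℝ) × ℝ in (𝓝 xb) ×ˢ atTop,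
            ((c / p.2 : ℝ) : EReal) ≤ φ (p.2 • p.1) / ((p.2 : ℝ) : EReal) := by
          filter_upwards [tendsto_snd.eventually_ge_atTop (0:ℝ)] with p hp
          rw [EReal.coe_div]
          exact EReal.div_le_div_right_of_nonneg (by exact_mod_cast hp) (hc _)
        calc (0 : EReal) = _ := h3.liminf_eq.symm
          _ ≤ _ := liminf_le_liminf h2
      have hle : asympFn φ xb ≤ 0 := by
        set q : ℕ → (Fin n → ℝ) × ℝ :=
          fun j => ((l2 (y j))⁻¹ • y j, l2 (y j)) with hqdef
        have hq : Tendsto q atTop ((𝓝 xb) ×ˢ atTop) := hy_dir.prodMk hy_l2_top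
        have h1 : asympFn φ xb ≤
            liminf (fun j => φ ((q j).2 • (q j).1) / (((q j).2 : ℝ) : EReal)) atTop := by
          rw [asympFn, show (fun j => φ ((q j).2 • (q j).1) / (((q j).2 : ℝ) : EReal))
              = (fun p : (Fin n → ℝ) × ℝ => φ (p.2 • p.1) / ((p.2 : ℝ) : EReal)) ∘ q from rfl,
            liminf_comp]
          exact liminf_le_liminf_of_le hq
        have h2 : ∀ᶠ j in atTop, φ ((q j).2 • (q j).1) / (((q j).2 : ℝ) : EReal)
            ≤ ((s j / l2 (y j) : ℝ) : EReal) := by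
          filter_upwards [hy_l2_top.eventually_ge_atTop 1] with j hj
          have hne : l2 (y j) ≠ 0 := by intro h; rw [h] at hj; linarith
          have hyy : (q j).2 • (q j).1 = y j := smul_inv_smul₀ hne _
          rw [hyy, EReal.coe_div]
          exact EReal.div_le_div_right_of_nonneg
            (by exact_mod_cast l2_nonneg (y j)) (hφy j)
        have h3 : Tendsto (fun j => ((s j / l2 (y j) : ℝ) : EReal)) atTop
            (𝓝 (0 : EReal)) := by
          rw [show (0 : EReal) = ((0 : ℝ) : EReal) by simp]
          apply EReal.tendsto_coe.2
          obtain ⟨M, hM⟩ := hsb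
          apply squeeze_zero_norm' ?_
            ((tendsto_const_nhds (x := M)).div_atTop hy_l2_top)
          filter_upwards [hy_l2_top.eventually_ge_atTop 1] with j hj
          have hpos : (0:ℝ) < l2 (y j) := by linarith
          rw [Real.norm_eq_abs, abs_div, abs_of_pos hpos]
          exact (div_le_div_iff_of_pos_right hpos).2 (hM j)
        calc asympFn φ xb ≤ _ := h1
          _ ≤ liminf (fun j => ((s j / l2 (y j) : ℝ) : EReal)) atTop :=
            liminf_le_liminf h2
          _ = 0 := h3.liminf_eq
      exact le_antisymm hle hge
    obtain ⟨k0, hk0⟩ := hals 1 one_pos s hsb y xb hφy hy_l2_top hy_dir hasymp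
    have hBxb : ∀ i, i ∉ T → B.mulVec xb i = 0 := by
      intro i hi
      have h1 : Tendsto (fun j => B.mulVec ((l2 (y j))⁻¹ • y j) i) atTop
          (𝓝 (B.mulVec xb i)) := ((mulVec_coord_continuous B i).tendsto xb).comp hy_dir
      have h2 : ∀ j, B.mulVec ((l2 (y j))⁻¹ • y j) i = 0 := by
        intro j
        rw [Matrix.mulVec_smul]
        have h3 : B.mulVec (y j) i = 0 := by
          by_contra hne
          exact hi (hy_supp j ▸ Finset.mem_filter.2 ⟨Finset.mem_univ i, hne⟩)
        simp [h3]
      have h4 : Tendsto (fun j => B.mulVec ((l2 (y j))⁻¹ • y j) i) atTop (𝓝 0) := by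
        simp only [h2]
        exact tendsto_const_nhds
      exact (tendsto_nhds_unique h1 h4)
    -- inner products
    have hipc : Tendsto (fun j => ∑ i, ((l2 (y j))⁻¹ • y j) i * xb i)
        atTop (𝓝 (∑ i, xb i * xb i)) := by
      have hcont : Continuous fun v : Fin n → ℝ => ∑ i, v i * xb i :=
        continuous_finset_sum _ fun i _ => (continuous_apply i).mul continuous_const
      exact (hcont.tendsto xb).comp hy_dir
    have hsum1 : ∑ i, xb i * xb i = 1 := by
      calc ∑ i, xb i * xb i = ∑ i, (xb i) ^ 2 := by
            refine Finset.sum_congr rfl fun i _ => ?_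
            ring
        _ = l2 xb ^ 2 := (l2_sq xb).symm
        _ = 1 := by rw [hxb1]; norm_num
    have hev1 : ∀ᶠ j in atTop, (1/2 : ℝ) ≤ ∑ i, ((l2 (y j))⁻¹ • y j) i * xb i := by
      have hlt : (1/2 : ℝ) < ∑ i, xb i * xb i := by rw [hsum1]; norm_num
      exact hipc.eventually (eventually_ge_nhds hlt)
    have hev2 : ∀ᶠ j in atTop, (2 : ℝ) ≤ l2 (y j) := hy_l2_top.eventually_ge_atTop 2
    obtain ⟨j, hj1, hj2, hj3⟩ := (hev1.and (hev2.and (eventually_ge_atTop k0))).exists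
    have hℓpos : (0:ℝ) < l2 (y j) := by linarith
    have hS : (1:ℝ) ≤ ∑ i, y j i * xb i := by
      have hexp : ∑ i, y j i * xb i
          = l2 (y j) * ∑ i, ((l2 (y j))⁻¹ • y j) i * xb i := by
        rw [Finset.mul_sum]
        refine Finset.sum_congr rfl fun i _ => ?_
        simp only [Pi.smul_apply, smul_eq_mul]
        field_simp
      rw [hexp]
      nlinarith
    have hφz : φ (y j - xb) ≤ ((s j : ℝ) : EReal) := by
      have := hk0 j hj3
      rwa [one_smul] at this
    have hsuppz : (Finset.univ.filter fun i => B.mulVec (y j - xb) i ≠ 0) ⊆ T := by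
      intro i hi
      by_contra hiT
      have h1 : B.mulVec (y j) i = 0 := by
        by_contra hne
        exact hiT (hy_supp j ▸ Finset.mem_filter.2 ⟨Finset.mem_univ i, hne⟩)
      have h2 := hBxb i hiT
      have h3 : B.mulVec (y j - xb) i = 0 := by
        rw [Matrix.mulVec_sub]
        simp [Pi.sub_apply, h1, h2]
      exact (Finset.mem_filter.1 hi).2 h3
    have hl0z : ((l0 (B.mulVec (y j - xb)) : ℕ) : ℝ) ≤ (T.card : ℝ) :=
      Nat.cast_le.2 (Finset.card_le_card hsuppz)
    have hΦz : (y j - xb) ∈ L (τ j) := by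
      show Φ (y j - xb) ≤ ((a + 1/((τ j : ℝ)+1) : ℝ) : EReal)
      calc Φ (y j - xb)
          ≤ ((s j : ℝ) : EReal) + ((lam * (T.card : ℝ) : ℝ) : EReal) := by
            refine add_le_add hφz ?_
            exact_mod_cast mul_le_mul_of_nonneg_left hl0z hlam.le
        _ = ((a + 1/((τ j : ℝ)+1) : ℝ) : EReal) := by
            rw [← EReal.coe_add]
            congr 1
            rw [hsdef]
            ring
    have hminj : l2 (y j) ≤ l2 (y j - xb) := hxmin (τ j) _ hΦz
    have hxbsq : ∑ i, (xb i) ^ 2 = 1 := by rw [← l2_sq, hxb1]; norm_num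
    have hsq : l2 (y j - xb) ^ 2
        = l2 (y j) ^ 2 - 2 * (∑ i, y j i * xb i) + 1 := by
      rw [l2_sq]
      have hterm : ∀ i : Fin n, ((y j - xb) i) ^ 2
          = (y j i) ^ 2 - 2 * (y j i * xb i) + (xb i) ^ 2 := by
        intro i
        simp only [Pi.sub_apply]
        ring
      rw [Finset.sum_congr rfl fun i _ => hterm i]
      rw [Finset.sum_add_distrib, Finset.sum_sub_distrib, ← Finset.mul_sum, hxbsq, ← l2_sq]
    have hsq2 : l2 (y j) ^ 2 ≤ l2 (y j - xb) ^ 2 :=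
      pow_le_pow_left₀ (l2_nonneg _) hminj 2
    nlinarith
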